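/- For every integer k > 0, the set (F_n)_k can be partitioned into pairwise disjoint subsets such that, for each 0 ≤ j ≤ n, exactly binom(k + j − 1, j) of these subsets each admit a target-preserving bijection onto (F_n)_{0,j}. (This is the set-level content of the identification of the degree-k quantum line bundle L_k over the quantum complex projective space with the projective module given by the projection ⊞_{j=0}^{n} ⊞^{binom(k+j−1,j)} ((⊗^j P_1) ⊗ (⊗^{n−j} I)).) -/

import Mathlib

/-! Common setup for the groupoid `F_n` of the quantum sphere `S_q^{2n+1}`. -/

/-- `x_i + w_i ≥ 0` for all `i` (vacuous at coordinates where `w_i = ∞`). -/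
def okPos {n : ℕ} (x : Fin n → ℤ) (w : Fin n → ℕ∞) : Prop :=
  ∀ i, ∀ m : ℕ, w i = (m : ℕ∞) → 0 ≤ x i + (m : ℤ)

/-- The defining condition of `F̃_n`: whenever `w_i = ∞`,
`x_i = -z - x_1 - ⋯ - x_{i-1}` and `x_j = 0` for `j > i`. -/
def condF {n : ℕ} (z : ℤ) (x : Fin n → ℤ) (w : Fin n → ℕ∞) : Prop :=
  ∀ i, w i = ⊤ → (x i = -z - ∑ j ∈ Finset.Iio i, x j) ∧ (∀ j, i < j → x j = 0)

/-- The set `F̃_n` of admissible triples `(z, x, w)`. -/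
abbrev FTil (n : ℕ) : Type :=
  {p : ℤ × (Fin n → ℤ) × (Fin n → ℕ∞) // okPos p.2.1 p.2.2 ∧ condF p.1 p.2.1 p.2.2}

/-- `ν(w)`: keep coordinates before the first `∞`, replace all later ones by `∞`. -/
def qnu {n : ℕ} (w : Fin n → ℕ∞) : Fin n → ℕ∞ :=
  fun i => if ∃ j, j ≤ i ∧ w j = ⊤ then ⊤ else w i

/-- Addition of an integer to an extended natural number (`a + ∞ = ∞`). -/
def addZN (a : ℤ) (b : ℕ∞) : ℕ∞ :=
  if b = ⊤ then ⊤ else (((a + (b.toNat : ℤ)).toNat : ℕ) : ℕ∞)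

/-- Coordinatewise sum `x + w`. -/
def addxw {n : ℕ} (x : Fin n → ℤ) (w : Fin n → ℕ∞) : Fin n → ℕ∞ :=
  fun i => addZN (x i) (w i)

/-- The relation `(z, x, w) ∼ (z', x', w')` iff `z = z'`, `x = x'`, `ν(w) = ν(w')`. -/
def FRel {n : ℕ} (a b : FTil n) : Prop :=
  a.val.1 = b.val.1 ∧ a.val.2.1 = b.val.2.1 ∧ qnu a.val.2.2 = qnu b.val.2.2

instance FSetoid (n : ℕ) : Setoid (FTil n) where
  r := FRel
  iseqv := ⟨fun _ => ⟨rfl, rfl, rfl⟩, fun h => ⟨h.1.symm, h.2.1.symm, h.2.2.symm⟩,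
    fun h1 h2 => ⟨h1.1.trans h2.1, h1.2.1.trans h2.2.1, h1.2.2.trans h2.2.2⟩⟩

/-- The groupoid `F_n = F̃_n / ∼`. -/
abbrev Fgpd (n : ℕ) : Type := Quotient (FSetoid n)

/-- The `z`-component of a class in `F_n`. -/
def qzp {n : ℕ} (g : Fgpd n) : ℤ :=
  Quotient.lift (fun a : FTil n => a.val.1) (fun a b h => (h : FRel a b).1) g

/-- The `x`-component of a class in `F_n`. -/
def qxp {n : ℕ} (g : Fgpd n) : Fin n → ℤ :=
  Quotient.lift (fun a : FTil n => a.val.2.1) (fun a b h => (h : FRel a b).2.1) g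

/-- The source `ν(w)` of a class in `F_n`. -/
def qsrc {n : ℕ} (g : Fgpd n) : Fin n → ℕ∞ :=
  Quotient.lift (fun a : FTil n => qnu a.val.2.2) (fun a b h => (h : FRel a b).2.2) g

/-- The target `ν(x + w)` of a class in `F_n` (computed on a representative). -/
noncomputable def qtgt {n : ℕ} (g : Fgpd n) : Fin n → ℕ∞ :=
  qnu (addxw g.out.val.2.1 g.out.val.2.2)

/-- `qIsMul g h p` states that the product `g · h` is defined and equals `p`:
the source of `g` equals the target of `h`, and `p = [(z + z', x + x', w')]`
(a class in `F_n` is determined by its `z`-, `x`-components and its source). -/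
def qIsMul {n : ℕ} (g h p : Fgpd n) : Prop :=
  qsrc g = qtgt h ∧ qzp p = qzp g + qzp h ∧
    (∀ i, qxp p i = qxp g i + qxp h i) ∧ qsrc p = qsrc h

/-- The subset `(F_n)_{k,j}` of classes of degree `k` whose source vanishes in the
first `j` coordinates. -/
def Fkj (n : ℕ) (k : ℤ) (j : ℕ) : Set (Fgpd n) :=
  {g : Fgpd n | qzp g = k ∧ ∀ i : Fin n, (i : ℕ) < j → qsrc g i = 0}

section Chunk1

open Finset

variable {n : ℕ}

/-! ### Basic `ℕ∞` helpers -/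

lemma enat_add_sub (x : ℕ∞) (c : ℕ) : x + (c : ℕ∞) - (c : ℕ∞) = x := by
  induction x using ENat.recTopCoe with
  | top => rw [top_add, ENat.top_sub_coe]
  | coe m => rw [← Nat.cast_add, ← ENat.coe_sub]; simp

lemma enat_sub_coe_eq_top_iff {x : ℕ∞} {c : ℕ} : x - (c : ℕ∞) = ⊤ ↔ x = ⊤ := by
  induction x using ENat.recTopCoe with
  | top => simp [ENat.top_sub_coe]
  | coe m => rw [← ENat.coe_sub]; simp

lemma enat_add_coe_eq_top_iff {x : ℕ∞} {c : ℕ} : x + (c : ℕ∞) = ⊤ ↔ x = ⊤ := by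
  induction x using ENat.recTopCoe with
  | top => simp
  | coe m =>
    refine iff_of_false ?_ (ENat.coe_ne_top m)
    rw [← Nat.cast_add]
    exact ENat.coe_ne_top _

/-! ### Lemmas about `qnu`, `addZN`, `addxw` -/

lemma addZN_eq_top {a : ℤ} {b : ℕ∞} : addZN a b = ⊤ ↔ b = ⊤ := by
  unfold addZN
  split <;> simp_all

lemma qnu_top_iff {w : Fin n → ℕ∞} {i : Fin n} : qnu w i = ⊤ ↔ ∃ j, j ≤ i ∧ w j = ⊤ := by
  unfold qnu
  by_cases h : ∃ j, j ≤ i ∧ w j = ⊤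
  · simp [h]
  · simp only [h, if_false, iff_false]
    intro hw
    exact h ⟨i, le_refl _, hw⟩

lemma qnu_eq_of_not {w : Fin n → ℕ∞} {i : Fin n} (h : ¬ ∃ j, j ≤ i ∧ w j = ⊤) :
    qnu w i = w i := if_neg h

lemma qnu_eq_self_of_mono {s : Fin n → ℕ∞} (h : ∀ i j : Fin n, i ≤ j → s i = ⊤ → s j = ⊤) :
    qnu s = s := by
  funext i
  unfold qnu
  split
  · next hex =>
    obtain ⟨j, hj, hjt⟩ := hex
    exact (h j i hj hjt).symm
  · rfl

lemma qnu_addxw (x : Fin n → ℤ) (w : Fin n → ℕ∞) :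
    qnu (addxw x w) = qnu (addxw x (qnu w)) := by
  funext i
  have h1 : (∃ j, j ≤ i ∧ addxw x w j = ⊤) ↔ (∃ j, j ≤ i ∧ w j = ⊤) := by
    apply exists_congr; intro j
    simp only [addxw, addZN_eq_top]
  have h2 : (∃ j, j ≤ i ∧ addxw x (qnu w) j = ⊤) ↔ (∃ j, j ≤ i ∧ w j = ⊤) := by
    constructor
    · rintro ⟨j, hj, hjt⟩
      rw [addxw, addZN_eq_top, qnu_top_iff] at hjt
      obtain ⟨l, hl, hlt⟩ := hjt
      exact ⟨l, le_trans hl hj, hlt⟩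
    · rintro ⟨j, hj, hjt⟩
      refine ⟨j, hj, ?_⟩
      rw [addxw, addZN_eq_top, qnu_top_iff]
      exact ⟨j, le_refl _, hjt⟩
  by_cases h : ∃ j, j ≤ i ∧ w j = ⊤
  · rw [qnu, if_pos (h1.mpr h), qnu, if_pos (h2.mpr h)]
  · rw [qnu_eq_of_not (fun hc => h (h1.mp hc)), qnu_eq_of_not (fun hc => h (h2.mp hc))]
    simp only [addxw]
    rw [qnu_eq_of_not (fun ⟨j, hj, hjt⟩ => h ⟨j, hj, hjt⟩)]

/-! ### Quotient API -/

lemma qzp_mk' (a : FTil n) : qzp (⟦a⟧ : Fgpd n) = a.val.1 := rfl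
lemma qxp_mk' (a : FTil n) : qxp (⟦a⟧ : Fgpd n) = a.val.2.1 := rfl
lemma qsrc_mk' (a : FTil n) : qsrc (⟦a⟧ : Fgpd n) = qnu a.val.2.2 := rfl

lemma Fgpd.ext {g h : Fgpd n} (hz : qzp g = qzp h) (hx : qxp g = qxp h)
    (hs : qsrc g = qsrc h) : g = h := by
  induction g using Quotient.ind with | _ a =>
  induction h using Quotient.ind with | _ b =>
  exact Quotient.sound ⟨hz, hx, hs⟩

lemma qtgt_mk' (a : FTil n) : qtgt (⟦a⟧ : Fgpd n) = qnu (addxw a.val.2.1 a.val.2.2) := by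
  have hout : ((⟦a⟧ : Fgpd n).out) ≈ a := Quotient.exact (Quotient.out_eq _)
  obtain ⟨hz, hx, hw⟩ := hout
  show qnu (addxw (⟦a⟧ : Fgpd n).out.val.2.1 (⟦a⟧ : Fgpd n).out.val.2.2) = _
  rw [qnu_addxw, hx, hw, ← qnu_addxw]

lemma qtgt_eq (g : Fgpd n) : qtgt g = qnu (addxw (qxp g) (qsrc g)) := by
  induction g using Quotient.ind with | _ a =>
  rw [qtgt_mk', qxp_mk', qsrc_mk', qnu_addxw]

lemma qsrc_qnu (g : Fgpd n) : qnu (qsrc g) = qsrc g := by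
  induction g using Quotient.ind with | _ a =>
  rw [qsrc_mk']
  apply qnu_eq_self_of_mono
  intro i j hij hi
  rw [qnu_top_iff] at hi ⊢
  obtain ⟨l, hl, hlt⟩ := hi
  exact ⟨l, le_trans hl hij, hlt⟩

lemma qsrc_mono {g : Fgpd n} {i j : Fin n} (hij : i ≤ j) (hi : qsrc g i = ⊤) :
    qsrc g j = ⊤ := by
  rw [← qsrc_qnu g] at hi
  rw [qnu_top_iff] at hi
  obtain ⟨l, hl, hlt⟩ := hi
  rw [← qsrc_qnu, qnu_top_iff]
  exact ⟨l, le_trans hl hij, hlt⟩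

lemma qsrc_not_exists {g : Fgpd n} {i : Fin n} (hi : qsrc g i ≠ ⊤) :
    ¬ ∃ j, j ≤ i ∧ qsrc g j = ⊤ := by
  rintro ⟨j, hj, hjt⟩
  exact hi (qsrc_mono hj hjt)

lemma qtgt_top_iff {g : Fgpd n} {i : Fin n} : qtgt g i = ⊤ ↔ qsrc g i = ⊤ := by
  rw [qtgt_eq]
  constructor
  · intro h
    rw [qnu_top_iff] at h
    obtain ⟨j, hj, hjt⟩ := h
    rw [addxw, addZN_eq_top] at hjt
    exact qsrc_mono hj hjt
  · intro h
    rw [qnu_top_iff]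
    exact ⟨i, le_refl _, by rw [addxw, addZN_eq_top]; exact h⟩

lemma qtgt_of_fin {g : Fgpd n} {i : Fin n} (hi : qsrc g i ≠ ⊤) :
    qtgt g i = addZN (qxp g i) (qsrc g i) := by
  rw [qtgt_eq]
  apply qnu_eq_of_not
  rintro ⟨j, hj, hjt⟩
  rw [addxw, addZN_eq_top] at hjt
  exact hi (qsrc_mono hj hjt)

/-- okPos at the level of the quotient. -/
lemma qokPos (g : Fgpd n) (i : Fin n) (m : ℕ) (h : qsrc g i = (m : ℕ∞)) :
    0 ≤ qxp g i + (m : ℤ) := by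
  induction g using Quotient.ind with | _ a =>
  rw [qsrc_mk'] at h
  have hne : qnu a.val.2.2 i ≠ ⊤ := by rw [h]; exact (ENat.coe_ne_top m)
  have hnex : ¬ ∃ j, j ≤ i ∧ a.val.2.2 j = ⊤ := fun hc => hne (qnu_top_iff.mpr hc)
  rw [qnu_eq_of_not hnex] at h
  exact a.2.1 i m h

end Chunk1

section Chunk2

open Finset

variable {n : ℕ}

/-- The `x`-component is determined by `z`, source and target at finite coordinates. -/
lemma qxp_of_fin {g : Fgpd n} {i : Fin n} {m : ℕ} (h : qsrc g i = (m : ℕ∞)) :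
    qxp g i = ((qtgt g i).toNat : ℤ) - (m : ℤ) := by
  have hne : qsrc g i ≠ ⊤ := by rw [h]; exact ENat.coe_ne_top m
  have ht := qtgt_of_fin hne
  rw [h] at ht
  rw [addZN] at ht
  rw [if_neg (ENat.coe_ne_top m)] at ht
  have hok := qokPos g i m h
  rw [ht]
  simp only [ENat.toNat_coe]
  have : ((qxp g i + (m:ℤ)).toNat : ℤ) = qxp g i + (m:ℤ) := Int.toNat_of_nonneg hok
  omega

/-- condF at the level of the quotient, for the least infinite coordinate. -/
lemma qcondF {g : Fgpd n} {i : Fin n} (h : qsrc g i = ⊤) (hmin : ∀ j : Fin n, j < i → qsrc g j ≠ ⊤) :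
    (qxp g i = -qzp g - ∑ j ∈ Finset.Iio i, qxp g j) ∧ (∀ j, i < j → qxp g j = 0) := by
  induction g using Quotient.ind with | _ a =>
  rw [qsrc_mk'] at h hmin
  rw [qnu_top_iff] at h
  obtain ⟨j, hj, hjt⟩ := h
  have hji : j = i := by
    rcases lt_or_eq_of_le hj with hlt | heq
    · exact absurd (qnu_top_iff.mpr ⟨j, le_refl _, hjt⟩) (hmin j hlt)
    · exact heq
  subst hji
  exact a.2.2 j hjt

lemma Fgpd.ext2 {g h : Fgpd n} (hz : qzp g = qzp h) (hs : qsrc g = qsrc h)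
    (ht : qtgt g = qtgt h) : g = h := by
  refine Fgpd.ext hz ?_ hs
  -- finite coordinates first
  have hfin : ∀ i : Fin n, qsrc g i ≠ ⊤ → qxp g i = qxp h i := by
    intro i hne
    have hm : (((qsrc g i).toNat : ℕ) : ℕ∞) = qsrc g i := ENat.coe_toNat hne
    rw [qxp_of_fin hm.symm, qxp_of_fin (hs ▸ hm.symm), ht, hs]
  funext i
  by_cases hne : qsrc g i = ⊤
  · -- find the least coordinate with value ⊤
    have hP : ∃ m : ℕ, ∃ hm : m < n, qsrc g ⟨m, hm⟩ = ⊤ := ⟨i.1, i.2, by rw [Fin.eta]; exact hne⟩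
    classical
    set m0 := Nat.find hP with hm0def
    obtain ⟨hm0n, hm0t⟩ := Nat.find_spec hP
    set i0 : Fin n := ⟨m0, hm0n⟩ with hi0def
    have hmin : ∀ j : Fin n, j < i0 → qsrc g j ≠ ⊤ := by
      intro j hji0 hjt
      exact Nat.find_min hP (m := j.1) hji0 ⟨j.2, by rw [Fin.eta]; exact hjt⟩
    have hminh : ∀ j : Fin n, j < i0 → qsrc h j ≠ ⊤ := by
      intro j hji0; rw [← hs]; exact hmin j hji0
    have hcg := qcondF hm0t hmin
    have hch := qcondF (hs ▸ hm0t) hminh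
    rcases lt_trichotomy i i0 with hlt | heq | hgt
    · exact absurd hne (hmin i hlt)
    · subst heq
      rw [hcg.1, hch.1, hz]
      congr 1
      apply Finset.sum_congr rfl
      intro j hj
      rw [Finset.mem_Iio] at hj
      exact hfin j (hmin j hj)
    · rw [hcg.2 i hgt, hch.2 i hgt]
  · exact hfin i hne

/-! ### The `mk` constructor -/

/-- The compatibility condition between a new source `s` and a target `t`. -/
def Good {n : ℕ} (s t : Fin n → ℕ∞) : Prop :=
  (∀ i, (s i = ⊤ ↔ t i = ⊤)) ∧ (∀ i j : Fin n, i ≤ j → s i = ⊤ → s j = ⊤)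

/-- The `x`-component reconstructed from `z`, a source `s` and a target `t`. -/
def mkx (z : ℤ) (s t : Fin n → ℕ∞) : Fin n → ℤ := fun i =>
  if s i = ⊤ then
    (if ∃ j, j < i ∧ s j = ⊤ then 0
     else -z - ∑ j ∈ Finset.Iio i, (((t j).toNat : ℤ) - ((s j).toNat : ℤ)))
  else (((t i).toNat : ℤ) - ((s i).toNat : ℤ))

lemma mkx_fin {z : ℤ} {s t : Fin n → ℕ∞} {i : Fin n} (h : s i ≠ ⊤) :
    mkx z s t i = ((t i).toNat : ℤ) - ((s i).toNat : ℤ) := by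
  rw [mkx, if_neg h]

lemma mk_okPos (z : ℤ) (s t : Fin n → ℕ∞) : okPos (mkx z s t) s := by
  intro i m him
  have hne : s i ≠ ⊤ := by rw [him]; exact ENat.coe_ne_top m
  rw [mkx_fin hne, him]
  simp only [ENat.toNat_coe]
  omega

lemma mk_condF (z : ℤ) (s t : Fin n → ℕ∞) (h2 : ∀ i j : Fin n, i ≤ j → s i = ⊤ → s j = ⊤) :
    condF z (mkx z s t) s := by
  intro i hi
  have hzero : ∀ j : Fin n, i < j → mkx z s t j = 0 := by
    intro j hij
    rw [mkx, if_pos (h2 i j (le_of_lt hij) hi), if_pos ⟨i, hij, hi⟩]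
  refine ⟨?_, hzero⟩
  by_cases hex : ∃ j, j < i ∧ s j = ⊤
  · -- not the least infinite coordinate: value is `0`, and the sum telescopes to `-z`
    rw [mkx, if_pos hi, if_pos hex]
    obtain ⟨j1, hj1i, hj1t⟩ := hex
    have hP : ∃ m : ℕ, ∃ hm : m < n, s ⟨m, hm⟩ = ⊤ := ⟨j1.1, j1.2, by rw [Fin.eta]; exact hj1t⟩
    classical
    set m0 := Nat.find hP with hm0def
    obtain ⟨hm0n, hm0t⟩ := Nat.find_spec hP
    set i0 : Fin n := ⟨m0, hm0n⟩ with hi0def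
    have hmin : ∀ j : Fin n, j < i0 → s j ≠ ⊤ := by
      intro j hji0 hjt
      exact Nat.find_min hP (m := j.1) hji0 ⟨j.2, by rw [Fin.eta]; exact hjt⟩
    have hi0i : i0 < i := by
      rcases lt_trichotomy i0 i with h' | h' | h'
      · exact h'
      · exact absurd hj1t (hmin j1 (by rw [h']; exact hj1i))
      · have : (m0 : ℕ) ≤ j1.1 := Nat.find_min' hP ⟨j1.2, by rw [Fin.eta]; exact hj1t⟩
        have : i0 ≤ j1 := this
        exact absurd (lt_of_le_of_lt this hj1i) (lt_asymm h')
    -- sum over Iio i equals sum over Iic i0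
    have hsub : Finset.Iic i0 ⊆ Finset.Iio i := by
      intro j hj
      rw [Finset.mem_Iic] at hj
      rw [Finset.mem_Iio]
      exact lt_of_le_of_lt hj hi0i
    have hz : ∀ j ∈ Finset.Iio i, j ∉ Finset.Iic i0 → mkx z s t j = 0 := by
      intro j _ hj
      rw [Finset.mem_Iic] at hj
      have hij : i0 < j := lt_of_not_ge hj
      rw [mkx, if_pos (h2 i0 j (le_of_lt hij) hm0t), if_pos ⟨i0, hij, hm0t⟩]
    rw [← Finset.sum_subset hsub hz]
    have hins : Finset.Iic i0 = insert i0 (Finset.Iio i0) := by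
      ext j
      simp [Finset.mem_Iic, Finset.mem_Iio, le_iff_lt_or_eq, or_comm]
    rw [hins, Finset.sum_insert (by simp)]
    have hmkx0 : mkx z s t i0 = -z - ∑ j ∈ Finset.Iio i0,
        (((t j).toNat : ℤ) - ((s j).toNat : ℤ)) := by
      rw [mkx, if_pos hm0t, if_neg (by rintro ⟨j, hj, hjt⟩; exact hmin j hj hjt)]
    have hsum0 : ∑ j ∈ Finset.Iio i0, mkx z s t j
        = ∑ j ∈ Finset.Iio i0, (((t j).toNat : ℤ) - ((s j).toNat : ℤ)) := by
      apply Finset.sum_congr rfl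
      intro j hj
      rw [Finset.mem_Iio] at hj
      exact mkx_fin (hmin j hj)
    rw [hmkx0, hsum0]
    ring
  · -- the least infinite coordinate
    rw [mkx, if_pos hi, if_neg hex]
    congr 1
    apply Finset.sum_congr rfl
    intro j hj
    rw [Finset.mem_Iio] at hj
    exact (mkx_fin (fun hc => hex ⟨j, hj, hc⟩)).symm

/-- A default element of `F̃_n`. -/
def FTil.default (n : ℕ) : FTil n :=
  ⟨(0, fun _ => 0, fun _ => 0), fun i m h => by simp, fun i h => absurd h (by simp)⟩

open Classical in
/-- Build a class in `F_n` from `z`, a source `s` and a target `t`. -/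
noncomputable def mkF (z : ℤ) (s t : Fin n → ℕ∞) : Fgpd n :=
  if h : Good s t then ⟦⟨(z, mkx z s t, s), mk_okPos z s t, mk_condF z s t h.2⟩⟧
  else ⟦FTil.default n⟧

lemma qzp_mkF {z : ℤ} {s t : Fin n → ℕ∞} (h : Good s t) : qzp (mkF z s t) = z := by
  rw [mkF, dif_pos h, qzp_mk']

lemma qsrc_mkF {z : ℤ} {s t : Fin n → ℕ∞} (h : Good s t) : qsrc (mkF z s t) = s := by
  rw [mkF, dif_pos h, qsrc_mk']
  exact qnu_eq_self_of_mono h.2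

lemma qtgt_mkF {z : ℤ} {s t : Fin n → ℕ∞} (h : Good s t) : qtgt (mkF z s t) = t := by
  rw [mkF, dif_pos h, qtgt_mk']
  funext i
  by_cases hi : s i = ⊤
  · rw [qnu, if_pos ⟨i, le_refl _, by rw [addxw, addZN_eq_top]; exact hi⟩]
    exact ((h.1 i).mp hi).symm
  · have hnex : ¬ ∃ j, j ≤ i ∧ s j = ⊤ := by
      rintro ⟨j, hj, hjt⟩
      exact hi (h.2 j i hj hjt)
    rw [qnu_eq_of_not (by
      rintro ⟨j, hj, hjt⟩
      rw [addxw, addZN_eq_top] at hjt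
      exact hnex ⟨j, hj, hjt⟩)]
    show addZN (mkx z s t i) (s i) = t i
    have hm : (((s i).toNat : ℕ) : ℕ∞) = s i := ENat.coe_toNat hi
    have hti : t i ≠ ⊤ := fun hc => hi ((h.1 i).mpr hc)
    rw [addZN, if_neg hi, mkx_fin hi]
    have : ((t i).toNat : ℤ) - ((s i).toNat : ℤ) + ((s i).toNat : ℤ)
        = ((t i).toNat : ℤ) := by ring
    rw [this]
    simp only [Int.toNat_natCast]
    exact ENat.coe_toNat hti

end Chunk2

section Chunk3

open Finset

/-! ### Counting tuples with bounded sum -/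

noncomputable instance sumLeFintype (j m : ℕ) : Fintype {a : Fin j → ℕ // ∑ i, a i ≤ m} := by
  classical
  apply Fintype.ofInjective (β := Fin j → Fin (m + 1))
    (f := fun a => fun i => ⟨a.1 i, by
      have : a.1 i ≤ ∑ i', a.1 i' := Finset.single_le_sum (fun _ _ => Nat.zero_le _) (Finset.mem_univ i)
      omega⟩)
  intro a b hab
  apply Subtype.ext
  funext i
  exact congrArg Fin.val (congrFun hab i)

/-- Splitting off the first coordinate. -/
noncomputable def sumLeSuccEquiv (j m : ℕ) :
    {a : Fin (j + 1) → ℕ // ∑ i, a i ≤ m} ≃ (Σ v : Fin (m + 1), {b : Fin j → ℕ // ∑ i, b i ≤ m - v.1}) where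
  toFun a := ⟨⟨a.1 0, by
      have h0 : a.1 0 ≤ ∑ i, a.1 i := Finset.single_le_sum (fun _ _ => Nat.zero_le _) (Finset.mem_univ 0)
      have := a.2; omega⟩,
    ⟨Fin.tail a.1, by
      show ∑ i, Fin.tail a.1 i ≤ m - a.1 0
      have hsum : ∑ i, a.1 i = a.1 0 + ∑ i, Fin.tail a.1 i := Fin.sum_univ_succ a.1
      have := a.2; omega⟩⟩
  invFun p := ⟨Fin.cons p.1.1 p.2.1, by
      have hsum : ∑ i, (Fin.cons (p.1.1 : ℕ) p.2.1 : Fin (j+1) → ℕ) i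
          = (p.1.1 : ℕ) + ∑ i, p.2.1 i := by
        rw [Fin.sum_univ_succ]
        simp [Fin.cons]
      have h1 := p.2.2
      have h2 : (p.1.1 : ℕ) ≤ m := Nat.lt_succ_iff.mp p.1.2
      omega⟩
  left_inv a := by
    apply Subtype.ext
    exact Fin.cons_self_tail a.1
  right_inv p := by
    refine Sigma.ext (by simp) ?_
    apply heq_of_eq
    apply Subtype.ext
    simp

lemma card_sumLe (j m : ℕ) : Fintype.card {a : Fin j → ℕ // ∑ i, a i ≤ m} = (m + j).choose j := by
  classical
  induction j generalizing m with
  | zero =>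
    have : ∀ a : Fin 0 → ℕ, ∑ i, a i ≤ m := by intro a; simp
    rw [Fintype.card_eq_one_iff_nonempty_unique.mpr]
    · simp
    · exact ⟨⟨⟨fun i => i.elim0, by simp⟩, fun a => Subtype.ext (funext fun i => i.elim0)⟩⟩
  | succ j ih =>
    rw [Fintype.card_congr (sumLeSuccEquiv j m), Fintype.card_sigma]
    have : ∀ v : Fin (m + 1), Fintype.card {b : Fin j → ℕ // ∑ i, b i ≤ m - v.1}
        = (m - v.1 + j).choose j := fun v => ih (m - v.1)
    rw [Finset.sum_congr rfl (fun v _ => this v)]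
    rw [Fin.sum_univ_eq_sum_range (fun v => (m - v + j).choose j) (m + 1)]
    rw [← Finset.sum_range_reflect (fun v => (m - v + j).choose j) (m + 1)]
    have hre : ∀ i ∈ Finset.range (m + 1), (m - (m + 1 - 1 - i) + j).choose j = (i + j).choose j := by
      intro i hi
      rw [Finset.mem_range] at hi
      congr 2
      omega
    rw [Finset.sum_congr rfl hre, Nat.sum_range_add_choose m j]
    rfl

/-- Enumeration of tuples `a : Fin j → ℕ` with `∑ a ≤ k - 1`. -/
noncomputable def encEquiv (k j : ℕ) (hk : 1 ≤ k) :
    {a : Fin j → ℕ // ∑ i, a i ≤ k - 1} ≃ Fin ((k + j - 1).choose j) :=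
  Fintype.equivFinOfCardEq (by rw [card_sumLe]; congr 2; omega)

end Chunk3

section Chunk4

open Finset

/-! ### The pieces of the partition and the bijections -/

/-- The piece of `(F_n)_k` indexed by `j ≤ n` and a tuple `a : Fin j → ℕ` with `∑ a ≤ k-1`. -/
def Aset (n k j : ℕ) (a : Fin j → ℕ) : Set (Fgpd n) :=
  {g | qzp g = (k : ℤ) ∧ (∀ i : Fin n, ∀ h : (i : ℕ) < j, qsrc g i = ((a ⟨i, h⟩ : ℕ) : ℕ∞)) ∧
       ∀ h : j < n, ((k - ∑ i, a i : ℕ) : ℕ∞) ≤ qsrc g ⟨j, h⟩}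

/-- The new source for the forward bijection. -/
noncomputable def sphi (n k j : ℕ) (a : Fin j → ℕ) (g : Fgpd n) : Fin n → ℕ∞ := fun i =>
  if (i : ℕ) < j then 0
  else if (i : ℕ) = j then qsrc g i - ((k - ∑ i', a i' : ℕ) : ℕ∞)
  else qsrc g i

/-- The new source for the backward bijection. -/
noncomputable def spsi (n k j : ℕ) (a : Fin j → ℕ) (g : Fgpd n) : Fin n → ℕ∞ := fun i =>
  if h : (i : ℕ) < j then ((a ⟨i, h⟩ : ℕ) : ℕ∞)
  else if (i : ℕ) = j then qsrc g i + ((k - ∑ i', a i' : ℕ) : ℕ∞)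
  else qsrc g i

noncomputable def phiF (n k j : ℕ) (a : Fin j → ℕ) (g : Fgpd n) : Fgpd n :=
  mkF 0 (sphi n k j a g) (qtgt g)

noncomputable def psiF (n k j : ℕ) (a : Fin j → ℕ) (g : Fgpd n) : Fgpd n :=
  mkF k (spsi n k j a g) (qtgt g)

variable {n k j : ℕ} {a : Fin j → ℕ} {g : Fgpd n}

lemma sphi_lt {i : Fin n} (h : (i : ℕ) < j) : sphi n k j a g i = 0 := if_pos h
lemma sphi_eq {i : Fin n} (h : (i : ℕ) = j) :
    sphi n k j a g i = qsrc g i - ((k - ∑ i', a i' : ℕ) : ℕ∞) := by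
  rw [sphi, if_neg (by omega), if_pos h]
lemma sphi_gt {i : Fin n} (h : j < (i : ℕ)) : sphi n k j a g i = qsrc g i := by
  rw [sphi, if_neg (by omega), if_neg (by omega)]

lemma spsi_lt {i : Fin n} (h : (i : ℕ) < j) : spsi n k j a g i = ((a ⟨i, h⟩ : ℕ) : ℕ∞) :=
  dif_pos h
lemma spsi_eq {i : Fin n} (h : (i : ℕ) = j) :
    spsi n k j a g i = qsrc g i + ((k - ∑ i', a i' : ℕ) : ℕ∞) := by
  rw [spsi, dif_neg (by omega), if_pos h]
lemma spsi_gt {i : Fin n} (h : j < (i : ℕ)) : spsi n k j a g i = qsrc g i := by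
  rw [spsi, dif_neg (by omega), if_neg (by omega)]

lemma sphi_top_iff (hg : g ∈ Aset n k j a) (i : Fin n) :
    sphi n k j a g i = ⊤ ↔ qsrc g i = ⊤ := by
  obtain ⟨hz, h2, h3⟩ := hg
  rcases lt_trichotomy (i : ℕ) j with h | h | h
  · rw [sphi_lt h, h2 i h]
    simp
  · rw [sphi_eq h, enat_sub_coe_eq_top_iff]
  · rw [sphi_gt h]

lemma good_sphi (hg : g ∈ Aset n k j a) : Good (sphi n k j a g) (qtgt g) := by
  constructor
  · intro i
    rw [sphi_top_iff hg, qtgt_top_iff]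
  · intro i l hil hi
    rw [sphi_top_iff hg] at hi
    have hl := qsrc_mono hil hi
    rw [sphi_top_iff hg]
    exact hl

lemma spsi_top_iff (hg : g ∈ Fkj n 0 j) (i : Fin n) :
    spsi n k j a g i = ⊤ ↔ qsrc g i = ⊤ := by
  obtain ⟨hz, h2⟩ := hg
  rcases lt_trichotomy (i : ℕ) j with h | h | h
  · rw [spsi_lt h, h2 i h]
    simp
  · rw [spsi_eq h, enat_add_coe_eq_top_iff]
  · rw [spsi_gt h]

lemma good_spsi (hg : g ∈ Fkj n 0 j) : Good (spsi n k j a g) (qtgt g) := by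
  constructor
  · intro i
    rw [spsi_top_iff hg, qtgt_top_iff]
  · intro i l hil hi
    rw [spsi_top_iff hg] at hi
    have hl := qsrc_mono hil hi
    rw [spsi_top_iff hg]
    exact hl

lemma phiF_mem (hg : g ∈ Aset n k j a) : phiF n k j a g ∈ Fkj n 0 j := by
  refine ⟨?_, ?_⟩
  · rw [phiF, qzp_mkF (good_sphi hg)]
  · intro i hij
    rw [phiF, qsrc_mkF (good_sphi hg), sphi_lt hij]

lemma phiF_tgt (hg : g ∈ Aset n k j a) : qtgt (phiF n k j a g) = qtgt g := by
  rw [phiF, qtgt_mkF (good_sphi hg)]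

lemma psiF_mem (hg : g ∈ Fkj n 0 j) : psiF n k j a g ∈ Aset n k j a := by
  refine ⟨?_, ?_, ?_⟩
  · rw [psiF, qzp_mkF (good_spsi hg)]
  · intro i hij
    rw [psiF, qsrc_mkF (good_spsi hg), spsi_lt hij]
  · intro hjn
    rw [psiF, qsrc_mkF (good_spsi hg), spsi_eq (by simp)]
    exact le_add_self

lemma psiF_tgt (hg : g ∈ Fkj n 0 j) : qtgt (psiF n k j a g) = qtgt g := by
  rw [psiF, qtgt_mkF (good_spsi hg)]

lemma psiF_phiF (hg : g ∈ Aset n k j a) : psiF n k j a (phiF n k j a g) = g := by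
  have hφ := phiF_mem hg
  apply Fgpd.ext2
  · rw [psiF, qzp_mkF (good_spsi hφ), hg.1]
  · rw [psiF, qsrc_mkF (good_spsi hφ)]
    funext i
    rcases lt_trichotomy (i : ℕ) j with h | h | h
    · rw [spsi_lt h, hg.2.1 i h]
    · rw [spsi_eq h, phiF, qsrc_mkF (good_sphi hg), sphi_eq h]
      have hjn : j < n := h ▸ i.2
      have hival : i = ⟨j, hjn⟩ := Fin.ext h
      have hle := hg.2.2 hjn
      rw [← hival] at hle
      exact tsub_add_cancel_of_le hle
    · rw [spsi_gt h, phiF, qsrc_mkF (good_sphi hg), sphi_gt h]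
  · rw [psiF_tgt hφ, phiF_tgt hg]

lemma phiF_psiF (hg : g ∈ Fkj n 0 j) : phiF n k j a (psiF n k j a g) = g := by
  have hψ := psiF_mem (k := k) (a := a) hg
  apply Fgpd.ext2
  · rw [phiF, qzp_mkF (good_sphi hψ), hg.1]
  · rw [phiF, qsrc_mkF (good_sphi hψ)]
    funext i
    rcases lt_trichotomy (i : ℕ) j with h | h | h
    · rw [sphi_lt h, hg.2 i h]
    · rw [sphi_eq h, psiF, qsrc_mkF (good_spsi hg), spsi_eq h]
      exact enat_add_sub _ _
    · rw [sphi_gt h, psiF, qsrc_mkF (good_spsi hg), spsi_gt h]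
  · rw [phiF_tgt hψ, psiF_tgt hg]

lemma bijAset : Set.BijOn (phiF n k j a) (Aset n k j a) (Fkj n 0 j) :=
  Set.InvOn.bijOn ⟨fun g hg => psiF_phiF hg, fun g hg => phiF_psiF hg⟩
    (fun g hg => phiF_mem hg) (fun g hg => psiF_mem hg)

end Chunk4

section Chunk5

open Finset

/-! ### Covering and disjointness -/

lemma filter_succ_insert {N m : ℕ} (hmN : m < N) :
    Finset.univ.filter (fun i : Fin N => (i : ℕ) < m + 1)
      = insert ⟨m, hmN⟩ (Finset.univ.filter (fun i : Fin N => (i : ℕ) < m)) := by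
  ext i
  simp only [Finset.mem_filter, Finset.mem_univ, true_and, Finset.mem_insert]
  constructor
  · intro hi
    rcases Nat.lt_succ_iff_lt_or_eq.mp hi with h | h
    · exact Or.inr h
    · exact Or.inl (Fin.ext h)
  · rintro (h | h)
    · subst h; exact Nat.lt_succ_self m
    · exact Nat.lt_succ_of_lt h

lemma filter_sum_eq {M : Type*} [AddCommMonoid M] {N : ℕ} (f : Fin N → M) :
    ∀ j, ∀ hj : j ≤ N,
    ∑ i ∈ Finset.univ.filter (fun i : Fin N => (i : ℕ) < j), f i
      = ∑ i : Fin j, f ⟨i.1, lt_of_lt_of_le i.2 hj⟩ := by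
  intro j
  induction j with
  | zero =>
    intro hj
    rw [Finset.filter_false_of_mem (by intro i _; omega)]
    simp
  | succ m ih =>
    intro hj
    have hmN : m < N := hj
    rw [filter_succ_insert hmN, Finset.sum_insert (by simp), ih (le_of_lt hmN),
      Fin.sum_univ_castSucc, add_comm]
    congr 1

/-- Every element of degree `k ≥ 1` belongs to some piece. -/
lemma cover {n k : ℕ} (hk : 1 ≤ k) (g : Fgpd n) (hg : qzp g = (k : ℤ)) :
    ∃ j : ℕ, ∃ a : Fin j → ℕ, j ≤ n ∧ (∑ i, a i ≤ k - 1) ∧ g ∈ Aset n k j a := by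
  classical
  set P : ℕ → Prop := fun j => j = n ∨ ∃ h : j < n,
    (k : ℕ∞) ≤ (∑ i ∈ Finset.univ.filter (fun i : Fin n => (i : ℕ) < j), qsrc g i)
      + qsrc g ⟨j, h⟩ with hPdef
  have hP : ∃ j, P j := ⟨n, Or.inl rfl⟩
  set j0 := Nat.find hP with hj0def
  have hj0n : j0 ≤ n := Nat.find_le (Or.inl rfl)
  have claim1 : ∀ i : Fin n, (i : ℕ) < j0 → qsrc g i ≠ ⊤ := by
    intro i hi ht
    refine Nat.find_min hP hi ?_
    refine Or.inr ⟨i.2, ?_⟩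
    rw [Fin.eta, ht]
    simp
  have hlt : ¬ (k : ℕ∞) ≤ ∑ i ∈ Finset.univ.filter (fun i : Fin n => (i : ℕ) < j0), qsrc g i := by
    match hj0 : j0, hj0def with
    | 0, _ =>
      rw [Finset.filter_false_of_mem (by intro i _; omega), Finset.sum_empty]
      intro hle
      have h0 : (k : ℕ∞) = 0 := le_antisymm hle zero_le
      rw [show (0 : ℕ∞) = ((0 : ℕ) : ℕ∞) from rfl, Nat.cast_inj] at h0
      omega
    | m + 1, hdef =>
      have hmn : m < n := by omega
      have hnot := Nat.find_min hP (by omega : m < Nat.find hP)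
      have hnle : ¬ (k : ℕ∞) ≤ (∑ i ∈ Finset.univ.filter (fun i : Fin n => (i : ℕ) < m), qsrc g i)
          + qsrc g ⟨m, hmn⟩ := fun hle => hnot (Or.inr ⟨hmn, hle⟩)
      rw [filter_succ_insert hmn, Finset.sum_insert (by simp), add_comm]
      exact hnle
  set a : Fin j0 → ℕ := fun i => (qsrc g ⟨i.1, lt_of_lt_of_le i.2 hj0n⟩).toNat with hadef
  have hSa : ((∑ i, a i : ℕ) : ℕ∞)
      = ∑ i ∈ Finset.univ.filter (fun i : Fin n => (i : ℕ) < j0), qsrc g i := by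
    rw [filter_sum_eq (qsrc g) j0 hj0n, Nat.cast_sum]
    apply Finset.sum_congr rfl
    intro i _
    exact ENat.coe_toNat (claim1 _ i.2)
  have hsumle : ∑ i, a i ≤ k - 1 := by
    rw [← hSa, Nat.cast_le] at hlt
    omega
  refine ⟨j0, a, hj0n, hsumle, hg, ?_, ?_⟩
  · intro i hi
    exact (ENat.coe_toNat (claim1 i hi)).symm
  · intro hjn
    have hspec := Nat.find_spec hP
    rcases hspec with h | ⟨h', hle⟩
    · omega
    · have heq : (⟨Nat.find hP, h'⟩ : Fin n) = ⟨j0, hjn⟩ := rfl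
      rw [heq] at hle
      rw [ENat.coe_sub, tsub_le_iff_right, hSa]
      exact hle.trans_eq (add_comm _ _)

/-- Two different pieces with `j < j'` cannot share an element. -/
lemma Aset_lt_empty {n k j j' : ℕ} {a : Fin j → ℕ} {a' : Fin j' → ℕ} {g : Fgpd n}
    (hk : 1 ≤ k) (hjn' : j' ≤ n) (hjj' : j < j')
    (ha : ∑ i, a i ≤ k - 1) (ha' : ∑ i, a' i ≤ k - 1)
    (hg : g ∈ Aset n k j a) (hg' : g ∈ Aset n k j' a') : False := by
  have hjn : j < n := lt_of_lt_of_le hjj' hjn'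
  have h3 := hg.2.2 hjn
  have hsrcj := hg'.2.1 ⟨j, hjn⟩ hjj'
  have hmk : (⟨((⟨j, hjn⟩ : Fin n) : ℕ), hjj'⟩ : Fin j') = ⟨j, hjj'⟩ := rfl
  rw [hmk] at hsrcj
  rw [hsrcj, Nat.cast_le] at h3
  have hpre : ∀ i : Fin j, a i = a' ⟨i.1, lt_of_lt_of_le i.2 (le_of_lt hjj')⟩ := by
    intro i
    have hiN : ((⟨i.1, lt_of_lt_of_le i.2 (le_of_lt hjn)⟩ : Fin n) : ℕ) < j := i.2
    have h1 := hg.2.1 ⟨i.1, lt_of_lt_of_le i.2 (le_of_lt hjn)⟩ hiN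
    have h2 := hg'.2.1 ⟨i.1, lt_of_lt_of_le i.2 (le_of_lt hjn)⟩ (lt_trans hiN hjj')
    rw [h1, Nat.cast_inj] at h2
    exact h2
  have hsum : ∑ i ∈ insert (⟨j, hjj'⟩ : Fin j')
      (Finset.univ.filter (fun i : Fin j' => (i : ℕ) < j)) , a' i ≤ ∑ i, a' i :=
    Finset.sum_le_sum_of_subset (Finset.subset_univ _)
  rw [Finset.sum_insert (by simp), filter_sum_eq a' j (le_of_lt hjj')] at hsum
  have hpresum : ∑ i : Fin j, a' ⟨i.1, lt_of_lt_of_le i.2 (le_of_lt hjj')⟩ = ∑ i, a i :=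
    Finset.sum_congr rfl (fun i _ => (hpre i).symm)
  rw [hpresum] at hsum
  omega

end Chunk5


/-- For `k > 0`, the set `(F_n)_k` can be partitioned into pairwise
disjoint subsets such that for each `0 ≤ j ≤ n`, exactly `binom(k + j - 1, j)` of them
each admit a target-preserving bijection onto `(F_n)_{0,j}`.  (This is the set-level
content of the identification of the degree-`k` quantum line bundle `L_k` over
`ℂP_q^n` with the projective module given by the projection
`⊞_{j=0}^n ⊞^{binom(k+j-1,j)} ((⊗^j P₁) ⊗ (⊗^{n-j} I))`.) -/
theorem stmt19 (n : ℕ) (hn : 1 ≤ n) (k : ℕ) (hk : 0 < k) :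
    ∃ A : ℕ × ℕ → Set (Fgpd n),
      (∀ q q' : ℕ × ℕ,
        (q.1 ≤ n ∧ q.2 < Nat.choose (k + q.1 - 1) q.1) →
        (q'.1 ≤ n ∧ q'.2 < Nat.choose (k + q'.1 - 1) q'.1) → q ≠ q' →
        Disjoint (A q) (A q')) ∧
      (⋃ q ∈ {q : ℕ × ℕ | q.1 ≤ n ∧ q.2 < Nat.choose (k + q.1 - 1) q.1}, A q) =
        {g : Fgpd n | qzp g = (k : ℤ)} ∧
      (∀ j c : ℕ, j ≤ n → c < Nat.choose (k + j - 1) j →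
        ∃ φ : Fgpd n → Fgpd n, Set.BijOn φ (A (j, c)) (Fkj n 0 j) ∧
          ∀ g ∈ A (j, c), qtgt (φ g) = qtgt g) := by
  classical
  have hk1 : 1 ≤ k := hk
  refine ⟨fun q => if h : q.1 ≤ n ∧ q.2 < (k + q.1 - 1).choose q.1
      then Aset n k q.1 ((encEquiv k q.1 hk1).symm ⟨q.2, h.2⟩).1 else ∅, ?_, ?_, ?_⟩
  · -- disjointness
    rintro ⟨j, c⟩ ⟨j', c'⟩ hq hq' hne
    simp only [dif_pos hq, dif_pos hq']
    rw [Set.disjoint_left]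
    intro g hg hg'
    set av := (encEquiv k j hk1).symm ⟨c, hq.2⟩ with havdef
    set av' := (encEquiv k j' hk1).symm ⟨c', hq'.2⟩ with havdef'
    rcases lt_trichotomy j j' with h | h | h
    · exact Aset_lt_empty hk1 hq'.1 h av.2 av'.2 hg hg'
    · subst h
      have hav : av = av' := by
        apply Subtype.ext
        funext i
        have h1 := hg.2.1 ⟨i.1, lt_of_lt_of_le i.2 hq.1⟩ i.2
        have h2 := hg'.2.1 ⟨i.1, lt_of_lt_of_le i.2 hq.1⟩ i.2
        rw [h1, Nat.cast_inj] at h2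
        exact h2
      have hcc : c = c' := by
        have := congrArg (fun x => ((encEquiv k j hk1) x : ℕ)) hav
        rw [havdef, havdef'] at this
        simpa using this
      exact hne (by rw [hcc])
    · exact Aset_lt_empty hk1 hq.1 h av'.2 av.2 hg' hg
  · -- union
    ext g
    simp only [Set.mem_iUnion, Set.mem_setOf_eq]
    constructor
    · rintro ⟨q, hq, hgq⟩
      simp only [dif_pos hq] at hgq
      exact hgq.1
    · intro hg
      obtain ⟨j, a, hjn, ha, hmem⟩ := cover hk1 g hg
      set c := encEquiv k j hk1 ⟨a, ha⟩ with hcdef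
      refine ⟨(j, (c : ℕ)), ⟨hjn, c.2⟩, ?_⟩
      simp only [dif_pos (⟨hjn, c.2⟩ : (j, (c : ℕ)).1 ≤ n ∧ (j, (c : ℕ)).2 < (k + (j, (c : ℕ)).1 - 1).choose (j, (c : ℕ)).1)]
      have hfin : (⟨(c : ℕ), c.2⟩ : Fin ((k + j - 1).choose j)) = c := rfl
      rw [hfin, hcdef, Equiv.symm_apply_apply]
      exact hmem
  · -- bijections
    intro j c hjn hc
    refine ⟨phiF n k j ((encEquiv k j hk1).symm ⟨c, hc⟩).1, ?_, ?_⟩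
    · simp only [dif_pos (⟨hjn, hc⟩ : (j, c).1 ≤ n ∧ (j, c).2 < (k + (j, c).1 - 1).choose (j, c).1)]
      exact bijAset
    · intro g hg
      simp only [dif_pos (⟨hjn, hc⟩ : (j, c).1 ≤ n ∧ (j, c).2 < (k + (j, c).1 - 1).choose (j, c).1)] at hg
      exact phiF_tgt hg
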